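/- arXiv:2010.16222 — 2 statements merged into one kernel-verified Lean document; each statement's English description precedes it below -/
import Mathlib

section
/- Let g be a complex one-loop fixed point on ℂ^N that is not identically zero, and let b₁(g) denote the real number ∑_{i,j} g_{ijij} (which is real by the reality condition). Then σ_N⁻ ≤ b₁(g) ≤ σ_N⁺, where σ_N⁺ = N(N+1)/(2(N+4)) and σ_N⁻ = (N/4)(1 − √(1 − 24/(25N))), and moreover ‖g‖² ≤ (2/(3N)) · b₁(g) · (N/2 − b₁(g)); in particular ‖g‖² ≤ N/24. -/
set_option maxHeartbeats 8000000

section aux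
variable {M : Type*} [Fintype M] {β : Type*} [AddCommMonoid β]

private lemma sum4_congr {F G : M → M → M → M → β}
    (h : ∀ i j k l, F i j k l = G i j k l) :
    ∑ i : M, ∑ j : M, ∑ k : M, ∑ l : M, F i j k l
      = ∑ i : M, ∑ j : M, ∑ k : M, ∑ l : M, G i j k l :=
  Finset.sum_congr rfl fun i _ => Finset.sum_congr rfl fun j _ =>
    Finset.sum_congr rfl fun k _ => Finset.sum_congr rfl fun l _ => h i j k l

private lemma perm_pairswap (F : M → M → M → M → β) :
    ∑ i : M, ∑ j : M, ∑ k : M, ∑ l : M, F i j k l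
      = ∑ k : M, ∑ l : M, ∑ i : M, ∑ j : M, F i j k l := by
  calc ∑ i : M, ∑ j : M, ∑ k : M, ∑ l : M, F i j k l
      = ∑ i : M, ∑ k : M, ∑ j : M, ∑ l : M, F i j k l :=
        Finset.sum_congr rfl fun i _ => Finset.sum_comm
    _ = ∑ k : M, ∑ i : M, ∑ j : M, ∑ l : M, F i j k l := Finset.sum_comm
    _ = ∑ k : M, ∑ i : M, ∑ l : M, ∑ j : M, F i j k l :=
        Finset.sum_congr rfl fun k _ => Finset.sum_congr rfl fun i _ => Finset.sum_comm
    _ = ∑ k : M, ∑ l : M, ∑ i : M, ∑ j : M, F i j k l :=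
        Finset.sum_congr rfl fun k _ => Finset.sum_comm

private lemma perm_swap12 (F : M → M → M → M → β) :
    ∑ i : M, ∑ j : M, ∑ k : M, ∑ l : M, F j i k l
      = ∑ i : M, ∑ j : M, ∑ k : M, ∑ l : M, F i j k l :=
  Finset.sum_comm

private lemma perm_swap34 (F : M → M → M → M → β) :
    ∑ i : M, ∑ j : M, ∑ k : M, ∑ l : M, F i j l k
      = ∑ i : M, ∑ j : M, ∑ k : M, ∑ l : M, F i j k l :=
  Finset.sum_congr rfl fun i _ => Finset.sum_congr rfl fun j _ => Finset.sum_comm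

private lemma perm_swapboth (F : M → M → M → M → β) :
    ∑ i : M, ∑ j : M, ∑ k : M, ∑ l : M, F j i l k
      = ∑ i : M, ∑ j : M, ∑ k : M, ∑ l : M, F i j k l := by
  calc ∑ i : M, ∑ j : M, ∑ k : M, ∑ l : M, F j i l k
      = ∑ i : M, ∑ j : M, ∑ k : M, ∑ l : M, F i j l k := Finset.sum_comm
    _ = ∑ i : M, ∑ j : M, ∑ k : M, ∑ l : M, F i j k l := perm_swap34 F

private lemma perm_mid (F : M → M → M → M → β) :
    ∑ i : M, ∑ j : M, ∑ k : M, ∑ l : M, F i k j l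
      = ∑ i : M, ∑ j : M, ∑ k : M, ∑ l : M, F i j k l :=
  Finset.sum_congr rfl fun i _ => Finset.sum_comm

private lemma perm_B (F : M → M → M → M → β) :
    ∑ i : M, ∑ j : M, ∑ k : M, ∑ l : M, F j k i l
      = ∑ i : M, ∑ j : M, ∑ k : M, ∑ l : M, F i j k l := by
  calc ∑ i : M, ∑ j : M, ∑ k : M, ∑ l : M, F j k i l
      = ∑ j : M, ∑ i : M, ∑ k : M, ∑ l : M, F j k i l := Finset.sum_comm
    _ = ∑ j : M, ∑ k : M, ∑ i : M, ∑ l : M, F j k i l :=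
        Finset.sum_congr rfl fun j _ => Finset.sum_comm
    _ = ∑ i : M, ∑ j : M, ∑ k : M, ∑ l : M, F i j k l := rfl

private lemma perm_C (F : M → M → M → M → β) :
    ∑ i : M, ∑ j : M, ∑ k : M, ∑ l : M, F j l i k
      = ∑ i : M, ∑ j : M, ∑ k : M, ∑ l : M, F i j k l := by
  calc ∑ i : M, ∑ j : M, ∑ k : M, ∑ l : M, F j l i k
      = ∑ j : M, ∑ i : M, ∑ k : M, ∑ l : M, F j l i k := Finset.sum_comm
    _ = ∑ j : M, ∑ i : M, ∑ l : M, ∑ k : M, F j l i k :=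
        Finset.sum_congr rfl fun j _ => Finset.sum_congr rfl fun i _ => Finset.sum_comm
    _ = ∑ j : M, ∑ l : M, ∑ i : M, ∑ k : M, F j l i k :=
        Finset.sum_congr rfl fun j _ => Finset.sum_comm
    _ = ∑ i : M, ∑ j : M, ∑ k : M, ∑ l : M, F i j k l := rfl

private lemma perm_F' (F : M → M → M → M → β) :
    ∑ i : M, ∑ j : M, ∑ k : M, ∑ l : M, F i l k j
      = ∑ i : M, ∑ j : M, ∑ k : M, ∑ l : M, F i j k l := by
  calc ∑ i : M, ∑ j : M, ∑ k : M, ∑ l : M, F i l k j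
      = ∑ i : M, ∑ j : M, ∑ l : M, ∑ k : M, F i l k j :=
        Finset.sum_congr rfl fun i _ => Finset.sum_congr rfl fun j _ => Finset.sum_comm
    _ = ∑ i : M, ∑ l : M, ∑ j : M, ∑ k : M, F i l k j :=
        Finset.sum_congr rfl fun i _ => Finset.sum_comm
    _ = ∑ i : M, ∑ l : M, ∑ k : M, ∑ j : M, F i l k j :=
        Finset.sum_congr rfl fun i _ => Finset.sum_congr rfl fun l _ => Finset.sum_comm
    _ = ∑ i : M, ∑ j : M, ∑ k : M, ∑ l : M, F i j k l := rfl

private lemma perm_G (F : M → M → M → M → β) :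
    ∑ i : M, ∑ j : M, ∑ k : M, ∑ l : M, F i l j k
      = ∑ i : M, ∑ j : M, ∑ k : M, ∑ l : M, F i j k l := by
  calc ∑ i : M, ∑ j : M, ∑ k : M, ∑ l : M, F i l j k
      = ∑ i : M, ∑ j : M, ∑ l : M, ∑ k : M, F i l j k :=
        Finset.sum_congr rfl fun i _ => Finset.sum_congr rfl fun j _ => Finset.sum_comm
    _ = ∑ i : M, ∑ l : M, ∑ j : M, ∑ k : M, F i l j k :=
        Finset.sum_congr rfl fun i _ => Finset.sum_comm
    _ = ∑ i : M, ∑ j : M, ∑ k : M, ∑ l : M, F i j k l := rfl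

private lemma sum4_le {F G : M → M → M → M → ℝ}
    (h : ∀ i j k l, F i j k l ≤ G i j k l) :
    ∑ i : M, ∑ j : M, ∑ k : M, ∑ l : M, F i j k l
      ≤ ∑ i : M, ∑ j : M, ∑ k : M, ∑ l : M, G i j k l :=
  Finset.sum_le_sum fun i _ => Finset.sum_le_sum fun j _ =>
    Finset.sum_le_sum fun k _ => Finset.sum_le_sum fun l _ => h i j k l

end aux

private lemma cs_abs {ι : Type*} [Fintype ι] (a b : ι → ℂ) :
    ‖∑ i, a i * b i‖ ^ 2
      ≤ (∑ i, ‖a i‖ ^ 2) * (∑ i, ‖b i‖ ^ 2) := by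
  have h1 : ‖∑ i, a i * b i‖ ≤ ∑ i, ‖a i‖ * ‖b i‖ := by
    refine (norm_sum_le _ _).trans_eq ?_
    simp [map_mul]
  calc ‖∑ i, a i * b i‖ ^ 2
      ≤ (∑ i, ‖a i‖ * ‖b i‖) ^ 2 :=
        pow_le_pow_left₀ (norm_nonneg _) h1 2
    _ ≤ _ := Finset.sum_mul_sq_le_sq_mul_sq _ _ _

private lemma cs_abs2 {N : ℕ} (a b : Fin N → Fin N → ℂ) :
    ‖∑ m : Fin N, ∑ n : Fin N, a m n * b m n‖ ^ 2
      ≤ (∑ m : Fin N, ∑ n : Fin N, ‖a m n‖ ^ 2)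
        * (∑ m : Fin N, ∑ n : Fin N, ‖b m n‖ ^ 2) := by
  have := cs_abs (ι := Fin N × Fin N) (fun p => a p.1 p.2) (fun p => b p.1 p.2)
  simpa [Fintype.sum_prod_type] using this

private lemma cs_abs4 {N : ℕ} (a b : Fin N → Fin N → Fin N → Fin N → ℂ) :
    ‖∑ i : Fin N, ∑ j : Fin N, ∑ k : Fin N, ∑ l : Fin N,
        a i j k l * b i j k l‖ ^ 2
      ≤ (∑ i : Fin N, ∑ j : Fin N, ∑ k : Fin N, ∑ l : Fin N, ‖a i j k l‖ ^ 2)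
        * (∑ i : Fin N, ∑ j : Fin N, ∑ k : Fin N, ∑ l : Fin N, ‖b i j k l‖ ^ 2) := by
  have := cs_abs (ι := Fin N × Fin N × Fin N × Fin N)
    (fun p => a p.1 p.2.1 p.2.2.1 p.2.2.2) (fun p => b p.1 p.2.1 p.2.2.1 p.2.2.2)
  simpa [Fintype.sum_prod_type] using this

private lemma Dpt {N : ℕ} (i j k l : Fin N) (z : ℂ) :
    (((if i = k then (1:ℂ) else 0) * (if j = l then (1:ℂ) else 0)
      + (if i = l then (1:ℂ) else 0) * (if j = k then (1:ℂ) else 0)) / 2) * z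
      = (if j = l then (if i = k then z else 0) else 0) / 2
        + (if i = l then (if j = k then z else 0) else 0) / 2 := by
  by_cases h1 : i = k <;> by_cases h2 : j = l <;> by_cases h3 : i = l <;>
    by_cases h4 : j = k <;> simp_all <;> ring

private lemma DDpt {N : ℕ} (i j k l : Fin N) :
    ‖(((if i = k then (1:ℂ) else 0) * (if j = l then (1:ℂ) else 0)
      + (if i = l then (1:ℂ) else 0) * (if j = k then (1:ℂ) else 0)) / 2)‖ ^ 2
      = (if j = l then (if i = k then (1:ℝ)/4 else 0) else 0)
        + (if i = l then (if j = k then (1:ℝ)/4 else 0) else 0)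
        + (if j = l then (if i = k then (if i = l then (if j = k then (1:ℝ)/2 else 0) else 0) else 0) else 0) := by
  by_cases h1 : i = k <;> by_cases h2 : j = l <;> by_cases h3 : i = l <;>
    by_cases h4 : j = k <;> simp_all <;> norm_num [norm_div, Complex.norm_two]



/-- `(g ♭ h)_{ijkl} = ∑_{m,n} g_{ijmn} h_{mnkl}`. -/
noncomputable def cflat {N : ℕ} (g h : Fin N → Fin N → Fin N → Fin N → ℂ) :
    Fin N → Fin N → Fin N → Fin N → ℂ :=
  fun i j k l => ∑ m : Fin N, ∑ n : Fin N, g i j m n * h m n k l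

/-- `(g ♯ h)_{ijkl} = ∑_{m,n} g_{imkn} h_{jnlm}`. -/
noncomputable def csharp {N : ℕ} (g h : Fin N → Fin N → Fin N → Fin N → ℂ) :
    Fin N → Fin N → Fin N → Fin N → ℂ :=
  fun i j k l => ∑ m : Fin N, ∑ n : Fin N, g i m k n * h j n l m

/-- `P(A)_{ijkl} = (A_{ijkl} + A_{jikl} + A_{ijlk} + A_{jilk})/4`. -/
noncomputable def cP {N : ℕ} (A : Fin N → Fin N → Fin N → Fin N → ℂ) :
    Fin N → Fin N → Fin N → Fin N → ℂ :=
  fun i j k l => (A i j k l + A j i k l + A i j l k + A j i l k) / 4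

/-- `‖g‖² = ∑_{i,j,k,l} |g_{ijkl}|²`. -/
noncomputable def csqnorm {N : ℕ} (g : Fin N → Fin N → Fin N → Fin N → ℂ) : ℝ :=
  ∑ i : Fin N, ∑ j : Fin N, ∑ k : Fin N, ∑ l : Fin N, ‖g i j k l‖ ^ 2

/-- A complex quartic coupling on `ℂ^N`: symmetric under `i ↔ j` and `k ↔ l`,
and satisfying the reality condition `conj g_{ijkl} = g_{klij}`. -/
def IsCplxCoupling {N : ℕ} (g : Fin N → Fin N → Fin N → Fin N → ℂ) : Prop :=
  (∀ i j k l, g i j k l = g j i k l) ∧ (∀ i j k l, g i j k l = g i j l k) ∧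
    (∀ i j k l, (starRingEnd ℂ) (g i j k l) = g k l i j)

/-- The complex one-loop fixed point equation `g = P(g ♭ g + 4 g ♯ g)`. -/
def IsCplxFixedPoint {N : ℕ} (g : Fin N → Fin N → Fin N → Fin N → ℂ) : Prop :=
  IsCplxCoupling g ∧
    ∀ i j k l, g i j k l =
      cP (fun a b c d => cflat g g a b c d + 4 * csharp g g a b c d) i j k l

/-- `b₁(g) = ∑_{i,j} g_{ijij}`, which is real by the reality condition. -/
noncomputable def b1 {N : ℕ} (g : Fin N → Fin N → Fin N → Fin N → ℂ) : ℝ :=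
  (∑ i : Fin N, ∑ j : Fin N, g i j i j).re

/-- for a nonzero complex one-loop fixed point,
`σ_N⁻ ≤ b₁(g) ≤ σ_N⁺` with `σ_N⁺ = N(N+1)/(2(N+4))` and
`σ_N⁻ = (N/4)(1 − √(1 − 24/(25N)))`, and
`‖g‖² ≤ (2/(3N)) b₁(g) (N/2 − b₁(g))`; in particular `‖g‖² ≤ N/24`. -/
theorem cplxFixedPoint_b1_bounds {N : ℕ} (hN : 1 ≤ N)
    (g : Fin N → Fin N → Fin N → Fin N → ℂ) (hfp : IsCplxFixedPoint g)
    (hne : g ≠ 0) :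
    ((N : ℝ) / 4 * (1 - Real.sqrt (1 - 24 / (25 * (N : ℝ)))) ≤ b1 g ∧
        b1 g ≤ (N : ℝ) * ((N : ℝ) + 1) / (2 * ((N : ℝ) + 4))) ∧
      csqnorm g ≤ 2 / (3 * (N : ℝ)) * b1 g * ((N : ℝ) / 2 - b1 g) ∧
      csqnorm g ≤ (N : ℝ) / 24 := by
  obtain ⟨⟨hs1, hs2, hc⟩, hfpe⟩ := hfp
  have hn1 : (1:ℝ) ≤ (N:ℝ) := by exact_mod_cast hN
  have hn0 : (0:ℝ) < (N:ℝ) := lt_of_lt_of_le zero_lt_one hn1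
  -- the matrix T and its squared norm t
  set T : Fin N → Fin N → ℂ := fun m q => ∑ i : Fin N, g i m i q with hT
  set t : ℝ := ∑ m : Fin N, ∑ q : Fin N, ‖T m q‖ ^ 2 with ht
  have ht0 : 0 ≤ t := by
    refine Finset.sum_nonneg fun m _ => Finset.sum_nonneg fun q _ => by positivity
  have hs0 : 0 ≤ csqnorm g := by
    refine Finset.sum_nonneg fun i _ => Finset.sum_nonneg fun j _ =>
      Finset.sum_nonneg fun k _ => Finset.sum_nonneg fun l _ => by positivity
  have hTconj : ∀ m q, (starRingEnd ℂ) (T m q) = T q m := by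
    intro m q
    rw [hT, map_sum]
    exact Finset.sum_congr rfl fun i _ => hc i m i q
  -- pointwise |.|^2 formula
  have hterm : ∀ i j k l, g i j k l * g k l i j = ((‖g i j k l‖ ^ 2 : ℝ) : ℂ) := by
    intro i j k l
    rw [← hc i j k l, Complex.mul_conj, ← Complex.sq_norm]
  have hnormC : ∑ i : Fin N, ∑ j : Fin N, ∑ k : Fin N, ∑ l : Fin N, g i j k l * g k l i j
      = ((csqnorm g : ℝ) : ℂ) := by
    rw [sum4_congr hterm, csqnorm]
    norm_cast
  -- the eight trace sums
  have hF1 : ∑ i : Fin N, ∑ j : Fin N, cflat g g i j i j = ((csqnorm g : ℝ) : ℂ) := by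
    simp only [cflat]
    exact hnormC
  have hF2 : ∑ i : Fin N, ∑ j : Fin N, cflat g g j i i j = ((csqnorm g : ℝ) : ℂ) := by
    simp only [cflat]
    rw [sum4_congr (G := fun i j m n => g i j m n * g m n i j)
      (fun i j m n => by rw [← hs1 i j m n])]
    exact hnormC
  have hF3 : ∑ i : Fin N, ∑ j : Fin N, cflat g g i j j i = ((csqnorm g : ℝ) : ℂ) := by
    simp only [cflat]
    rw [sum4_congr (G := fun i j m n => g i j m n * g m n i j)
      (fun i j m n => by rw [← hs2 m n i j])]
    exact hnormC
  have hF4 : ∑ i : Fin N, ∑ j : Fin N, cflat g g j i j i = ((csqnorm g : ℝ) : ℂ) := by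
    simp only [cflat]
    rw [sum4_congr (G := fun i j m n => g i j m n * g m n i j)
      (fun i j m n => by rw [← hs1 i j m n, ← hs2 m n i j])]
    exact hnormC
  have hTsum : ∀ m q : Fin N, T m q * T q m = ((‖T m q‖ ^ 2 : ℝ) : ℂ) := by
    intro m q
    rw [← hTconj m q, Complex.mul_conj, ← Complex.sq_norm]
  have hSh1 : ∑ i : Fin N, ∑ j : Fin N, csharp g g i j i j = ((t : ℝ) : ℂ) := by
    simp only [csharp]
    rw [perm_pairswap (fun i j m q => g i m i q * g j q j m)]
    have : ∀ m q : Fin N, (∑ i : Fin N, ∑ j : Fin N, g i m i q * g j q j m)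
        = ((‖T m q‖ ^ 2 : ℝ) : ℂ) := by
      intro m q
      rw [← Finset.sum_mul_sum]
      exact hTsum m q
    rw [Finset.sum_congr rfl fun m _ => Finset.sum_congr rfl fun q _ => this m q, ht]
    norm_cast
  have hSh4 : ∑ i : Fin N, ∑ j : Fin N, csharp g g j i j i = ((t : ℝ) : ℂ) := by
    simp only [csharp]
    rw [perm_pairswap (fun i j m q => g j m j q * g i q i m)]
    have : ∀ m q : Fin N, (∑ i : Fin N, ∑ j : Fin N, g j m j q * g i q i m)
        = ((‖T m q‖ ^ 2 : ℝ) : ℂ) := by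
      intro m q
      rw [Finset.sum_comm (f := fun i j => g j m j q * g i q i m)]
      rw [← Finset.sum_mul_sum]
      exact hTsum m q
    rw [Finset.sum_congr rfl fun m _ => Finset.sum_congr rfl fun q _ => this m q, ht]
    norm_cast
  have hSh2 : ∑ i : Fin N, ∑ j : Fin N, csharp g g j i i j = ((csqnorm g : ℝ) : ℂ) := by
    simp only [csharp]
    rw [sum4_congr (G := fun i j m q => ((‖g j m i q‖ ^ 2 : ℝ) : ℂ))
      (fun i j m q => by rw [← hc j m i q, Complex.mul_conj, ← Complex.sq_norm])]
    have := perm_B (M := Fin N) (β := ℝ) (fun a b c d => ‖g a b c d‖ ^ 2)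
    rw [csqnorm]
    norm_cast
  have hSh3 : ∑ i : Fin N, ∑ j : Fin N, csharp g g i j j i = ((csqnorm g : ℝ) : ℂ) := by
    simp only [csharp]
    rw [sum4_congr (G := fun i j m q => ((‖g j q i m‖ ^ 2 : ℝ) : ℂ))
      (fun i j m q => by rw [mul_comm, ← hc j q i m, Complex.mul_conj, ← Complex.sq_norm])]
    have := perm_C (M := Fin N) (β := ℝ) (fun a b c d => ‖g a b c d‖ ^ 2)
    rw [csqnorm]
    norm_cast
  -- trace identity
  have hbC : ∑ i : Fin N, ∑ j : Fin N, g i j i j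
      = ((3 * csqnorm g + 2 * t : ℝ) : ℂ) := by
    have step1 : ∑ i : Fin N, ∑ j : Fin N, g i j i j
        = ∑ i : Fin N, ∑ j : Fin N,
          ((cflat g g i j i j + 4 * csharp g g i j i j)
            + (cflat g g j i i j + 4 * csharp g g j i i j)
            + (cflat g g i j j i + 4 * csharp g g i j j i)
            + (cflat g g j i j i + 4 * csharp g g j i j i)) / 4 := by
      refine Finset.sum_congr rfl fun i _ => Finset.sum_congr rfl fun j _ => ?_
      rw [hfpe i j i j]
      rfl
    rw [step1]
    simp only [← Finset.sum_div, Finset.sum_add_distrib, ← Finset.mul_sum]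
    rw [hF1, hF2, hF3, hF4, hSh1, hSh2, hSh3, hSh4]
    push_cast
    ring
  have hb_def : b1 g = 3 * csqnorm g + 2 * t := by
    rw [b1, hbC, Complex.ofReal_re]
  -- Cauchy-Schwarz on the trace of T : b1^2 ≤ N * t
  have htrace : ∑ m : Fin N, T m m = ∑ i : Fin N, ∑ j : Fin N, g i j i j :=
    Finset.sum_comm
  have hb_re : b1 g = ∑ m : Fin N, (T m m).re := by
    rw [b1, ← htrace, Complex.re_sum]
  have hCS1 : (b1 g) ^ 2 ≤ (N : ℝ) * t := by
    calc (b1 g) ^ 2 = (∑ m : Fin N, (T m m).re) ^ 2 := by rw [hb_re]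
      _ ≤ (Finset.univ.card : ℝ) * ∑ m : Fin N, (T m m).re ^ 2 :=
          sq_sum_le_card_mul_sum_sq
      _ = (N : ℝ) * ∑ m : Fin N, (T m m).re ^ 2 := by
          rw [Finset.card_univ, Fintype.card_fin]
      _ ≤ (N : ℝ) * ∑ m : Fin N, ‖T m m‖ ^ 2 := by
          refine mul_le_mul_of_nonneg_left (Finset.sum_le_sum fun m _ => ?_) hn0.le
          calc (T m m).re ^ 2 = |(T m m).re| ^ 2 := (sq_abs _).symm
            _ ≤ ‖T m m‖ ^ 2 :=
                pow_le_pow_left₀ (abs_nonneg _) (Complex.abs_re_le_norm _) 2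
      _ ≤ (N : ℝ) * t := by
          refine mul_le_mul_of_nonneg_left (Finset.sum_le_sum fun m _ => ?_) hn0.le
          exact Finset.single_le_sum (f := fun q => ‖T m q‖ ^ 2)
            (fun q _ => by positivity) (Finset.mem_univ m)
  -- Cauchy-Schwarz with the delta tensor : b1^2 ≤ N(N+1)/2 * csqnorm
  set D : Fin N → Fin N → Fin N → Fin N → ℂ := fun i j k l =>
    ((if i = k then (1:ℂ) else 0) * (if j = l then (1:ℂ) else 0)
      + (if i = l then (1:ℂ) else 0) * (if j = k then (1:ℂ) else 0)) / 2 with hD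
  have hDg : ∑ i : Fin N, ∑ j : Fin N, ∑ k : Fin N, ∑ l : Fin N, D i j k l * g i j k l
      = ∑ i : Fin N, ∑ j : Fin N, g i j i j := by
    have hpt : ∀ i j k l, D i j k l * g i j k l
        = (if j = l then (if i = k then g i j k l else 0) else 0) / 2
          + (if i = l then (if j = k then g i j k l else 0) else 0) / 2 := by
      intro i j k l
      rw [hD]
      exact Dpt i j k l (g i j k l)
    rw [sum4_congr hpt]
    simp only [Finset.sum_add_distrib, ← Finset.sum_div]
    have e1 : ∑ i : Fin N, ∑ j : Fin N, ∑ k : Fin N, ∑ l : Fin N,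
        (if j = l then (if i = k then g i j k l else 0) else 0)
        = ∑ i : Fin N, ∑ j : Fin N, g i j i j := by
      simp only [Finset.sum_ite_eq, Finset.mem_univ, if_true]
    have e2 : ∑ i : Fin N, ∑ j : Fin N, ∑ k : Fin N, ∑ l : Fin N,
        (if i = l then (if j = k then g i j k l else 0) else 0)
        = ∑ i : Fin N, ∑ j : Fin N, g i j i j := by
      simp only [Finset.sum_ite_eq, Finset.mem_univ, if_true]
      exact Finset.sum_congr rfl fun i _ => Finset.sum_congr rfl fun j _ =>
        hs2 i j j i
    rw [e1, e2]
    ring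
  have hDD : ∑ i : Fin N, ∑ j : Fin N, ∑ k : Fin N, ∑ l : Fin N, ‖D i j k l‖ ^ 2
      = (N : ℝ) * ((N : ℝ) + 1) / 2 := by
    have hpt : ∀ i j k l : Fin N, ‖D i j k l‖ ^ 2
        = (if j = l then (if i = k then (1:ℝ)/4 else 0) else 0)
          + (if i = l then (if j = k then (1:ℝ)/4 else 0) else 0)
          + (if j = l then (if i = k then (if i = l then (if j = k then (1:ℝ)/2 else 0) else 0) else 0) else 0) := by
      intro i j k l
      rw [hD]
      exact DDpt i j k l
    simp only [hpt, Finset.sum_add_distrib]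
    simp only [Finset.sum_ite_eq, Finset.mem_univ, if_true, if_pos rfl]
    simp only [Finset.sum_const, Finset.card_univ, Fintype.card_fin, nsmul_eq_mul]
    push_cast
    ring
  have hCS2 : (b1 g) ^ 2 ≤ ((N : ℝ) * ((N : ℝ) + 1) / 2) * csqnorm g := by
    have h := cs_abs4 D g
    rw [hDg, hDD] at h
    have hgb : ∑ i : Fin N, ∑ j : Fin N, g i j i j = ((b1 g : ℝ) : ℂ) := by
      rw [hbC, hb_def]
    rw [hgb, Complex.norm_real, Real.norm_eq_abs, sq_abs] at h
    exact h.trans_eq (by rw [csqnorm])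
  -- bounds on the squared norms of cflat and csharp
  have hflat_sq : ∑ i : Fin N, ∑ j : Fin N, ∑ k : Fin N, ∑ l : Fin N,
      ‖cflat g g i j k l‖ ^ 2 ≤ csqnorm g * csqnorm g := by
    have hpt : ∀ i j k l : Fin N, ‖cflat g g i j k l‖ ^ 2
        ≤ (∑ m : Fin N, ∑ n : Fin N, ‖g i j m n‖ ^ 2)
          * (∑ m : Fin N, ∑ n : Fin N, ‖g m n k l‖ ^ 2) := by
      intro i j k l
      exact cs_abs2 (fun m n => g i j m n) (fun m n => g m n k l)
    refine (sum4_le hpt).trans_eq ?_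
    rw [sum4_congr (G := fun i j k l =>
        (∑ m : Fin N, ∑ n : Fin N, ‖g i j m n‖ ^ 2)
          * (∑ m : Fin N, ∑ n : Fin N, ‖g m n k l‖ ^ 2)) (fun i j k l => rfl)]
    simp only [← Finset.mul_sum, ← Finset.sum_mul]
    congr 1
    exact (perm_pairswap (fun m n k l => ‖g m n k l‖ ^ 2)).symm
  have hsharp_sq : ∑ i : Fin N, ∑ j : Fin N, ∑ k : Fin N, ∑ l : Fin N,
      ‖csharp g g i j k l‖ ^ 2 ≤ csqnorm g * csqnorm g := by
    have hpt : ∀ i j k l : Fin N, ‖csharp g g i j k l‖ ^ 2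
        ≤ (∑ m : Fin N, ∑ n : Fin N, ‖g i m k n‖ ^ 2)
          * (∑ m : Fin N, ∑ n : Fin N, ‖g j n l m‖ ^ 2) := by
      intro i j k l
      exact cs_abs2 (fun m n => g i m k n) (fun m n => g j n l m)
    refine (sum4_le hpt).trans_eq ?_
    calc ∑ i : Fin N, ∑ j : Fin N, ∑ k : Fin N, ∑ l : Fin N,
        (∑ m : Fin N, ∑ n : Fin N, ‖g i m k n‖ ^ 2)
          * (∑ m : Fin N, ∑ n : Fin N, ‖g j n l m‖ ^ 2)
        = ∑ i : Fin N, ∑ j : Fin N, ∑ k : Fin N, ∑ l : Fin N,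
          (∑ m : Fin N, ∑ n : Fin N, ‖g i m j n‖ ^ 2)
            * (∑ m : Fin N, ∑ n : Fin N, ‖g k n l m‖ ^ 2) :=
          perm_mid (fun a b c d =>
            (∑ m : Fin N, ∑ n : Fin N, ‖g a m b n‖ ^ 2)
              * (∑ m : Fin N, ∑ n : Fin N, ‖g c n d m‖ ^ 2))
      _ = (∑ i : Fin N, ∑ j : Fin N, ∑ m : Fin N, ∑ n : Fin N, ‖g i m j n‖ ^ 2)
            * (∑ k : Fin N, ∑ l : Fin N, ∑ m : Fin N, ∑ n : Fin N,
                ‖g k n l m‖ ^ 2) := by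
          simp only [← Finset.mul_sum, ← Finset.sum_mul]
      _ = csqnorm g * csqnorm g := by
          rw [csqnorm]
          congr 1
          · exact perm_mid (fun a b c d => ‖g a b c d‖ ^ 2)
          · exact perm_G (fun a b c d => ‖g a b c d‖ ^ 2)
  -- the contraction of the fixed point equation with conj g
  have hnormC' : ∑ i : Fin N, ∑ j : Fin N, ∑ k : Fin N, ∑ l : Fin N, g k l i j * g i j k l
      = ((csqnorm g : ℝ) : ℂ) := by
    rw [sum4_congr (G := fun i j k l => g i j k l * g k l i j)
      (fun i j k l => mul_comm _ _)]
    exact hnormC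
  set r : ℝ := Real.sqrt (csqnorm g) with hr
  have hr0 : 0 ≤ r := Real.sqrt_nonneg _
  have hr2 : r ^ 2 = csqnorm g := Real.sq_sqrt hs0
  have key_bound : ∀ F : Fin N → Fin N → Fin N → Fin N → ℂ,
      (∑ i : Fin N, ∑ j : Fin N, ∑ k : Fin N, ∑ l : Fin N, ‖F i j k l‖ ^ 2)
        ≤ csqnorm g * csqnorm g →
      ‖∑ i : Fin N, ∑ j : Fin N, ∑ k : Fin N, ∑ l : Fin N,
        g k l i j * F i j k l‖ ≤ csqnorm g * r := by
    intro F hF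
    have h := cs_abs4 (fun i j k l => g k l i j) F
    have h1 : (∑ i : Fin N, ∑ j : Fin N, ∑ k : Fin N, ∑ l : Fin N,
        ‖g k l i j‖ ^ 2) = csqnorm g := by
      rw [csqnorm]
      exact (perm_pairswap (fun a b c d => ‖g a b c d‖ ^ 2)).symm
    rw [h1] at h
    refine le_of_pow_le_pow_left₀ two_ne_zero (by positivity) ?_
    calc ‖∑ i : Fin N, ∑ j : Fin N, ∑ k : Fin N, ∑ l : Fin N,
          g k l i j * F i j k l‖ ^ 2
        ≤ csqnorm g * (csqnorm g * csqnorm g) :=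
          h.trans (mul_le_mul_of_nonneg_left hF hs0)
      _ = (csqnorm g * r) ^ 2 := by rw [mul_pow, hr2]; ring
  have hfl1 := key_bound (fun i j k l => cflat g g i j k l) hflat_sq
  have hfl2 := key_bound (fun i j k l => cflat g g j i k l)
    ((perm_swap12 (fun a b c d => ‖cflat g g a b c d‖ ^ 2)).trans_le hflat_sq)
  have hfl3 := key_bound (fun i j k l => cflat g g i j l k)
    ((perm_swap34 (fun a b c d => ‖cflat g g a b c d‖ ^ 2)).trans_le hflat_sq)
  have hfl4 := key_bound (fun i j k l => cflat g g j i l k)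
    ((perm_swapboth (fun a b c d => ‖cflat g g a b c d‖ ^ 2)).trans_le hflat_sq)
  have hsp1 := key_bound (fun i j k l => csharp g g i j k l) hsharp_sq
  have hsp2 := key_bound (fun i j k l => csharp g g j i k l)
    ((perm_swap12 (fun a b c d => ‖csharp g g a b c d‖ ^ 2)).trans_le hsharp_sq)
  have hsp3 := key_bound (fun i j k l => csharp g g i j l k)
    ((perm_swap34 (fun a b c d => ‖csharp g g a b c d‖ ^ 2)).trans_le hsharp_sq)
  have hsp4 := key_bound (fun i j k l => csharp g g j i l k)
    ((perm_swapboth (fun a b c d => ‖csharp g g a b c d‖ ^ 2)).trans_le hsharp_sq)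
  have hsplit : ((csqnorm g : ℝ) : ℂ) =
      ((∑ i : Fin N, ∑ j : Fin N, ∑ k : Fin N, ∑ l : Fin N, g k l i j * cflat g g i j k l)
        + 4 * (∑ i : Fin N, ∑ j : Fin N, ∑ k : Fin N, ∑ l : Fin N, g k l i j * csharp g g i j k l)
        + ((∑ i : Fin N, ∑ j : Fin N, ∑ k : Fin N, ∑ l : Fin N, g k l i j * cflat g g j i k l)
          + 4 * (∑ i : Fin N, ∑ j : Fin N, ∑ k : Fin N, ∑ l : Fin N, g k l i j * csharp g g j i k l))
        + ((∑ i : Fin N, ∑ j : Fin N, ∑ k : Fin N, ∑ l : Fin N, g k l i j * cflat g g i j l k)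
          + 4 * (∑ i : Fin N, ∑ j : Fin N, ∑ k : Fin N, ∑ l : Fin N, g k l i j * csharp g g i j l k))
        + ((∑ i : Fin N, ∑ j : Fin N, ∑ k : Fin N, ∑ l : Fin N, g k l i j * cflat g g j i l k)
          + 4 * (∑ i : Fin N, ∑ j : Fin N, ∑ k : Fin N, ∑ l : Fin N, g k l i j * csharp g g j i l k))) / 4 := by
    rw [← hnormC']
    have e0 : ∀ i j k l : Fin N, g k l i j * g i j k l
        = (g k l i j * cflat g g i j k l + 4 * (g k l i j * csharp g g i j k l)
          + (g k l i j * cflat g g j i k l + 4 * (g k l i j * csharp g g j i k l))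
          + (g k l i j * cflat g g i j l k + 4 * (g k l i j * csharp g g i j l k))
          + (g k l i j * cflat g g j i l k + 4 * (g k l i j * csharp g g j i l k))) / 4 := by
      intro i j k l
      conv_lhs => rw [hfpe i j k l]
      simp only [cP]
      ring
    rw [sum4_congr e0]
    simp only [Finset.sum_add_distrib, ← Finset.sum_div, ← Finset.mul_sum]
  have hbig : csqnorm g ≤ 5 * (csqnorm g * r) := by
    have habs4 : ‖(4 : ℂ)‖ = 4 := by norm_num [Complex.norm_ofNat]
    have hWb : ∀ (Zf Zs : ℂ), ‖Zf‖ ≤ csqnorm g * r → ‖Zs‖ ≤ csqnorm g * r →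
        ‖Zf + 4 * Zs‖ ≤ 5 * (csqnorm g * r) := by
      intro Zf Zs h1 h2
      calc ‖Zf + 4 * Zs‖ ≤ ‖Zf‖ + ‖4 * Zs‖ :=
            norm_add_le _ _
        _ = ‖Zf‖ + 4 * ‖Zs‖ := by rw [norm_mul, habs4]
        _ ≤ csqnorm g * r + 4 * (csqnorm g * r) := by
            refine add_le_add h1 (by linarith)
        _ = 5 * (csqnorm g * r) := by ring
    have hW1 := hWb _ _ hfl1 hsp1
    have hW2 := hWb _ _ hfl2 hsp2
    have hW3 := hWb _ _ hfl3 hsp3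
    have hW4 := hWb _ _ hfl4 hsp4
    have habs : csqnorm g = ‖((csqnorm g : ℝ) : ℂ)‖ := by
      rw [Complex.norm_real, Real.norm_eq_abs, abs_of_nonneg hs0]
    have habs_sum : ∀ w1 w2 w3 w4 : ℂ, ‖w1‖ ≤ 5 * (csqnorm g * r) →
        ‖w2‖ ≤ 5 * (csqnorm g * r) → ‖w3‖ ≤ 5 * (csqnorm g * r) →
        ‖w4‖ ≤ 5 * (csqnorm g * r) →
        ‖w1 + w2 + w3 + w4‖ / 4 ≤ 5 * (csqnorm g * r) := by
      intro w1 w2 w3 w4 h1 h2 h3 h4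
      have k1 := norm_add_le (w1 + w2 + w3) w4
      have k2 := norm_add_le (w1 + w2) w3
      have k3 := norm_add_le w1 w2
      linarith
    refine habs.trans_le ?_
    rw [hsplit, norm_div, habs4]
    exact habs_sum _ _ _ _ hW1 hW2 hW3 hW4
  -- positivity of the norm
  have hgpos : 0 < csqnorm g := by
    obtain ⟨i, j, k, l, hijkl⟩ : ∃ i j k l, g i j k l ≠ 0 := by
      by_contra hcon
      push_neg at hcon
      exact hne (funext fun i => funext fun j => funext fun k => funext fun l => hcon i j k l)
    have h1 : 0 < ‖g i j k l‖ ^ 2 := pow_pos (norm_pos_iff.mpr hijkl) 2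
    have t4 : ‖g i j k l‖ ^ 2 ≤ ∑ l' : Fin N, ‖g i j k l'‖ ^ 2 :=
      Finset.single_le_sum (f := fun l' => ‖g i j k l'‖ ^ 2)
        (fun _ _ => sq_nonneg _) (Finset.mem_univ l)
    have t3 : ∑ l' : Fin N, ‖g i j k l'‖ ^ 2
        ≤ ∑ k' : Fin N, ∑ l' : Fin N, ‖g i j k' l'‖ ^ 2 :=
      Finset.single_le_sum (f := fun k' => ∑ l' : Fin N, ‖g i j k' l'‖ ^ 2)
        (fun _ _ => Finset.sum_nonneg fun _ _ => sq_nonneg _) (Finset.mem_univ k)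
    have t2 : ∑ k' : Fin N, ∑ l' : Fin N, ‖g i j k' l'‖ ^ 2
        ≤ ∑ j' : Fin N, ∑ k' : Fin N, ∑ l' : Fin N, ‖g i j' k' l'‖ ^ 2 :=
      Finset.single_le_sum
        (f := fun j' => ∑ k' : Fin N, ∑ l' : Fin N, ‖g i j' k' l'‖ ^ 2)
        (fun _ _ => Finset.sum_nonneg fun _ _ => Finset.sum_nonneg fun _ _ => sq_nonneg _)
        (Finset.mem_univ j)
    have t1 : ∑ j' : Fin N, ∑ k' : Fin N, ∑ l' : Fin N, ‖g i j' k' l'‖ ^ 2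
        ≤ ∑ i' : Fin N, ∑ j' : Fin N, ∑ k' : Fin N, ∑ l' : Fin N,
            ‖g i' j' k' l'‖ ^ 2 :=
      Finset.single_le_sum
        (f := fun i' => ∑ j' : Fin N, ∑ k' : Fin N, ∑ l' : Fin N,
          ‖g i' j' k' l'‖ ^ 2)
        (fun _ _ => Finset.sum_nonneg fun _ _ => Finset.sum_nonneg fun _ _ =>
          Finset.sum_nonneg fun _ _ => sq_nonneg _)
        (Finset.mem_univ i)
    rw [csqnorm]
    linarith
  have hs25 : 1 / 25 ≤ csqnorm g := by
    have h5 : 1 ≤ 5 * r := by nlinarith [hbig, hgpos]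
    nlinarith [hr2, hr0]
  -- the master inequality
  have hNb : (N : ℝ) * b1 g = 3 * (N : ℝ) * csqnorm g + 2 * ((N : ℝ) * t) := by
    rw [hb_def]; ring
  have key : 3 * (N : ℝ) * csqnorm g ≤ b1 g * (N : ℝ) - 2 * (b1 g) ^ 2 := by
    linarith [hCS1, hNb]
  have hb_pos : 0 < b1 g := by rw [hb_def]; linarith [hs25, ht0]
  -- goal 3 : csqnorm g ≤ 2/(3N) b1 (N/2 - b1)
  have G3 : csqnorm g ≤ 2 / (3 * (N : ℝ)) * b1 g * ((N : ℝ) / 2 - b1 g) := by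
    have h33 : 2 / (3 * (N : ℝ)) * b1 g * ((N : ℝ) / 2 - b1 g)
        = (b1 g * (N : ℝ) - 2 * (b1 g) ^ 2) / (3 * (N : ℝ)) := by
      field_simp
    rw [h33, le_div_iff₀ (by positivity)]
    linarith [key]
  -- goal 4 : csqnorm g ≤ N/24
  have G4 : csqnorm g ≤ (N : ℝ) / 24 := by
    rw [le_div_iff₀ (by norm_num : (0:ℝ) < 24)]
    have h8 : b1 g * (N : ℝ) - 2 * (b1 g) ^ 2 ≤ (N : ℝ) ^ 2 / 8 := by
      nlinarith [sq_nonneg (b1 g - (N : ℝ) / 4)]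
    have h24 : 24 * ((N : ℝ) * csqnorm g) ≤ (N : ℝ) * (N : ℝ) := by nlinarith [key, h8]
    nlinarith [h24, hn0, hgpos]
  -- goal 2 : upper bound on b1
  have G2 : b1 g ≤ (N : ℝ) * ((N : ℝ) + 1) / (2 * ((N : ℝ) + 4)) := by
    rw [le_div_iff₀ (by positivity : (0:ℝ) < 2 * ((N : ℝ) + 4))]
    have h6 : 6 * (b1 g) ^ 2 ≤ ((N : ℝ) + 1) * (b1 g * (N : ℝ) - 2 * (b1 g) ^ 2) := by
      have k1 := mul_le_mul_of_nonneg_left key (by linarith : (0:ℝ) ≤ (N : ℝ) + 1)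
      nlinarith [hCS2]
    nlinarith [h6, hb_pos, mul_pos hb_pos hb_pos]
  -- goal 1 : lower bound on b1
  have G1 : (N : ℝ) / 4 * (1 - Real.sqrt (1 - 24 / (25 * (N : ℝ)))) ≤ b1 g := by
    have hq : 2 * (b1 g) ^ 2 - (N : ℝ) * b1 g + 3 * (N : ℝ) / 25 ≤ 0 := by
      have := mul_le_mul_of_nonneg_left hs25 (by positivity : (0:ℝ) ≤ 3 * (N : ℝ))
      linarith [key]
    have hargn : (0:ℝ) ≤ 1 - 24 / (25 * (N : ℝ)) := by
      have h1 : 24 / (25 * (N : ℝ)) ≤ 24 / 25 :=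
        div_le_div_of_nonneg_left (by norm_num) (by norm_num) (by linarith)
      linarith
    set rt : ℝ := Real.sqrt (1 - 24 / (25 * (N : ℝ))) with hrt
    have hrt2 : rt ^ 2 = 1 - 24 / (25 * (N : ℝ)) := Real.sq_sqrt hargn
    have hrt0 : 0 ≤ rt := Real.sqrt_nonneg _
    have hNrt : ((N : ℝ) * rt) ^ 2 = (N : ℝ) ^ 2 - 24 * (N : ℝ) / 25 := by
      rw [mul_pow, hrt2]
      field_simp
    have hkey2 : (N : ℝ) - 4 * b1 g ≤ (N : ℝ) * rt := by
      rcases le_or_gt ((N : ℝ) - 4 * b1 g) 0 with h | h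
      · exact h.trans (by positivity)
      · refine le_of_pow_le_pow_left₀ two_ne_zero (by positivity) ?_
        rw [hNrt]
        nlinarith [hq]
    linarith [hkey2]
  exact ⟨⟨G1, G2⟩, G3, G4⟩
end

section
/- Let N ≥ 1 be an integer and let g be a complex quartic coupling on ℂ^N satisfying the one-loop fixed-point equation of bosonic QED at the nontrivial gauge coupling, namely ((N+18)/N) · g_{ijkl} = P(g ♭ g + 4 · g ♯ g)_{ijkl} + (54/N²) · T_{ijkl} for all i,j,k,l, where T_{ijkl} = (δ_{ik}δ_{jl} + δ_{il}δ_{jk})/2. Then N ≥ 90 + 24√15; in particular N ≥ 183, i.e. there are no such fixed points with fewer than 183 flavors. -/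
/-- `T_{ijkl} = (δ_{ik}δ_{jl} + δ_{il}δ_{jk})/2`. -/
noncomputable def Tdelta {N : ℕ} : Fin N → Fin N → Fin N → Fin N → ℂ :=
  fun i j k l =>
    ((if i = k then (1 : ℂ) else 0) * (if j = l then (1 : ℂ) else 0)
      + (if i = l then (1 : ℂ) else 0) * (if j = k then (1 : ℂ) else 0)) / 2

-- helper: 4-fold sum commutation
lemma sum_comm4 {M : Type*} [AddCommMonoid M] {N : ℕ}
    (f : Fin N → Fin N → Fin N → Fin N → M) :
    ∑ i : Fin N, ∑ j : Fin N, ∑ m : Fin N, ∑ n : Fin N, f i j m n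
      = ∑ m : Fin N, ∑ n : Fin N, ∑ i : Fin N, ∑ j : Fin N, f i j m n := by
  calc ∑ i : Fin N, ∑ j : Fin N, ∑ m : Fin N, ∑ n : Fin N, f i j m n
      = ∑ i : Fin N, ∑ m : Fin N, ∑ j : Fin N, ∑ n : Fin N, f i j m n :=
        Finset.sum_congr rfl fun i _ => Finset.sum_comm
    _ = ∑ m : Fin N, ∑ i : Fin N, ∑ j : Fin N, ∑ n : Fin N, f i j m n :=
        Finset.sum_comm
    _ = ∑ m : Fin N, ∑ i : Fin N, ∑ n : Fin N, ∑ j : Fin N, f i j m n :=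
        Finset.sum_congr rfl fun m _ => Finset.sum_congr rfl fun i _ => Finset.sum_comm
    _ = ∑ m : Fin N, ∑ n : Fin N, ∑ i : Fin N, ∑ j : Fin N, f i j m n :=
        Finset.sum_congr rfl fun m _ => Finset.sum_comm

-- helper: pair of terms bounded by sum
lemma pair_le_sum {N : ℕ} (F : Fin N → ℝ) (hF : ∀ k, 0 ≤ F k) {i j : Fin N} (h : i ≠ j) :
    F i + F j ≤ ∑ k : Fin N, F k := by
  have : F i + F j = ∑ k ∈ ({i, j} : Finset (Fin N)), F k := (Finset.sum_pair h).symm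
  rw [this]
  exact Finset.sum_le_sum_of_subset_of_nonneg (Finset.subset_univ _) (fun k _ _ => hF k)


/-- if a complex quartic coupling `g` on `ℂ^N` satisfies the
one-loop fixed-point equation of bosonic QED at the nontrivial gauge coupling,
`((N+18)/N) g = P(g ♭ g + 4 g ♯ g) + (54/N²) T`, then `N ≥ 90 + 24√15`;
in particular `N ≥ 183`: there are no such fixed points with fewer than 183
flavors. -/
theorem bosonicQED_flavor_bound {N : ℕ} (hN : 1 ≤ N)
    (g : Fin N → Fin N → Fin N → Fin N → ℂ) (hg : IsCplxCoupling g)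
    (hfp : ∀ i j k l, (((N : ℂ) + 18) / (N : ℂ)) * g i j k l =
      cP (fun a b c d => cflat g g a b c d + 4 * csharp g g a b c d) i j k l
        + 54 / (N : ℂ) ^ 2 * Tdelta i j k l) :
    90 + 24 * Real.sqrt 15 ≤ (N : ℝ) ∧ 183 ≤ N := by
  obtain ⟨hsym1, hsym2, hstar⟩ := hg
  set K := (starRingEnd ℂ) with hK
  set B : Fin N → Fin N → ℂ := fun m n => ∑ i : Fin N, g i m i n with hB
  set t : ℝ := ∑ i : Fin N, ∑ j : Fin N, (g i j i j).re with ht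
  set ng : ℝ := csqnorm g with hng
  set b : ℝ := ∑ m : Fin N, ∑ n : Fin N, Complex.normSq (B m n) with hb
  -- S is real
  have hS : (∑ i : Fin N, ∑ j : Fin N, g i j i j) = (t : ℂ) := by
    rw [ht]; push_cast
    exact Finset.sum_congr rfl fun i _ => Finset.sum_congr rfl fun j _ =>
      (Complex.conj_eq_iff_re.mp (hstar i j i j)).symm
  -- the norm as a complex sum
  have hNgC : (∑ i : Fin N, ∑ j : Fin N, ∑ k : Fin N, ∑ l : Fin N,
      g i j k l * K (g i j k l)) = (ng : ℂ) := by
    rw [hng]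
    unfold csqnorm
    push_cast
    exact Finset.sum_congr rfl fun i _ => Finset.sum_congr rfl fun j _ =>
      Finset.sum_congr rfl fun k _ => Finset.sum_congr rfl fun l _ => by
        rw [hK, Complex.mul_conj]
        norm_cast
        exact (Complex.sq_norm _).symm
  have hBconj : ∀ m n, K (B m n) = B n m := by
    intro m n
    rw [hB]
    simp only [map_sum]
    exact Finset.sum_congr rfl fun i _ => hstar i m i n
  have hbC : (∑ m : Fin N, ∑ n : Fin N, B m n * B n m) = (b : ℂ) := by
    rw [hb]; push_cast
    exact Finset.sum_congr rfl fun m _ => Finset.sum_congr rfl fun n _ => by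
      rw [← hBconj m n, hK, Complex.mul_conj]
  -- the eight contraction identities
  have hflat1 : (∑ i : Fin N, ∑ j : Fin N, cflat g g i j i j) = (ng : ℂ) := by
    unfold cflat
    refine Eq.trans ?_ hNgC
    exact Finset.sum_congr rfl fun i _ => Finset.sum_congr rfl fun j _ =>
      Finset.sum_congr rfl fun m _ => Finset.sum_congr rfl fun n _ => by
        rw [hstar i j m n]
  have hflat2 : (∑ i : Fin N, ∑ j : Fin N, cflat g g j i i j) = (ng : ℂ) := by
    unfold cflat
    refine Eq.trans ?_ hNgC
    exact Finset.sum_congr rfl fun i _ => Finset.sum_congr rfl fun j _ =>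
      Finset.sum_congr rfl fun m _ => Finset.sum_congr rfl fun n _ => by
        rw [← hsym1 i j m n, hstar i j m n]
  have hflat3 : (∑ i : Fin N, ∑ j : Fin N, cflat g g i j j i) = (ng : ℂ) := by
    unfold cflat
    refine Eq.trans ?_ hNgC
    exact Finset.sum_congr rfl fun i _ => Finset.sum_congr rfl fun j _ =>
      Finset.sum_congr rfl fun m _ => Finset.sum_congr rfl fun n _ => by
        rw [← hsym2 m n i j, hstar i j m n]
  have hflat4 : (∑ i : Fin N, ∑ j : Fin N, cflat g g j i j i) = (ng : ℂ) := by
    unfold cflat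
    refine Eq.trans ?_ hNgC
    exact Finset.sum_congr rfl fun i _ => Finset.sum_congr rfl fun j _ =>
      Finset.sum_congr rfl fun m _ => Finset.sum_congr rfl fun n _ => by
        rw [← hsym1 i j m n, ← hsym2 m n i j, hstar i j m n]
  have hsharp1 : (∑ i : Fin N, ∑ j : Fin N, csharp g g i j i j) = (b : ℂ) := by
    unfold csharp
    rw [sum_comm4 (fun i j m n => g i m i n * g j n j m)]
    refine Eq.trans ?_ hbC
    exact Finset.sum_congr rfl fun m _ => Finset.sum_congr rfl fun n _ =>
      (Finset.sum_mul_sum _ _ _ _).symm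
  have hsharp4 : (∑ i : Fin N, ∑ j : Fin N, csharp g g j i j i) = (b : ℂ) := by
    unfold csharp
    rw [sum_comm4 (fun i j m n => g j m j n * g i n i m)]
    refine Eq.trans ?_ hbC
    refine Finset.sum_congr rfl fun m _ => Finset.sum_congr rfl fun n _ => ?_
    calc ∑ i : Fin N, ∑ j : Fin N, g j m j n * g i n i m
        = ∑ i : Fin N, (∑ j : Fin N, g j m j n) * g i n i m :=
          Finset.sum_congr rfl fun i _ => (Finset.sum_mul _ _ _).symm
      _ = (∑ j : Fin N, g j m j n) * ∑ i : Fin N, g i n i m := (Finset.mul_sum _ _ _).symm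
      _ = B m n * B n m := rfl
  have hsharp2 : (∑ i : Fin N, ∑ j : Fin N, csharp g g j i i j) = (ng : ℂ) := by
    unfold csharp
    have step : (∑ i : Fin N, ∑ j : Fin N, ∑ m : Fin N, ∑ n : Fin N, g j m i n * g i n j m)
        = ∑ i : Fin N, ∑ j : Fin N, ∑ m : Fin N, ∑ n : Fin N,
            g j m i n * K (g j m i n) :=
      Finset.sum_congr rfl fun i _ => Finset.sum_congr rfl fun j _ =>
        Finset.sum_congr rfl fun m _ => Finset.sum_congr rfl fun n _ => by
          rw [hstar j m i n]
    rw [step]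
    calc ∑ i : Fin N, ∑ j : Fin N, ∑ m : Fin N, ∑ n : Fin N, g j m i n * K (g j m i n)
        = ∑ j : Fin N, ∑ i : Fin N, ∑ m : Fin N, ∑ n : Fin N, g j m i n * K (g j m i n) :=
          Finset.sum_comm
      _ = ∑ j : Fin N, ∑ m : Fin N, ∑ i : Fin N, ∑ n : Fin N, g j m i n * K (g j m i n) :=
          Finset.sum_congr rfl fun j _ => Finset.sum_comm
      _ = (ng : ℂ) := hNgC
  have hsharp3 : (∑ i : Fin N, ∑ j : Fin N, csharp g g i j j i) = (ng : ℂ) := by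
    unfold csharp
    have step : (∑ i : Fin N, ∑ j : Fin N, ∑ m : Fin N, ∑ n : Fin N, g i m j n * g j n i m)
        = ∑ i : Fin N, ∑ j : Fin N, ∑ m : Fin N, ∑ n : Fin N,
            g i m j n * K (g i m j n) :=
      Finset.sum_congr rfl fun i _ => Finset.sum_congr rfl fun j _ =>
        Finset.sum_congr rfl fun m _ => Finset.sum_congr rfl fun n _ => by
          rw [hstar i m j n]
    rw [step]
    calc ∑ i : Fin N, ∑ j : Fin N, ∑ m : Fin N, ∑ n : Fin N, g i m j n * K (g i m j n)
        = ∑ i : Fin N, ∑ m : Fin N, ∑ j : Fin N, ∑ n : Fin N, g i m j n * K (g i m j n) :=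
          Finset.sum_congr rfl fun i _ => Finset.sum_comm
      _ = (ng : ℂ) := hNgC
  -- Tdelta contraction
  have hT : (∑ i : Fin N, ∑ j : Fin N, Tdelta i j i j) = ((N : ℂ)^2 + N)/2 := by
    have : ∀ i j : Fin N, Tdelta i j i j = (1 + if i = j then (1:ℂ) else 0)/2 := by
      intro i j
      unfold Tdelta
      by_cases h : i = j <;> simp [h]
    calc ∑ i : Fin N, ∑ j : Fin N, Tdelta i j i j
        = ∑ _i : Fin N, (((N : ℂ) + 1)/2) := by
          refine Finset.sum_congr rfl fun i _ => ?_
          simp only [this]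
          rw [← Finset.sum_div, Finset.sum_add_distrib, Finset.sum_ite_eq, Finset.sum_const,
            Finset.card_univ, Fintype.card_fin]
          simp
      _ = ((N : ℂ)^2 + N)/2 := by
          rw [Finset.sum_const, Finset.card_univ, Fintype.card_fin]
          ring
  -- expansion of the symmetrized quadratic term
  have hcP : ∀ i j : Fin N,
      cP (fun a b c d => cflat g g a b c d + 4 * csharp g g a b c d) i j i j
      = (1/4 : ℂ) * cflat g g i j i j + (1/4 : ℂ) * cflat g g j i i j
        + (1/4 : ℂ) * cflat g g i j j i + (1/4 : ℂ) * cflat g g j i j i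
        + csharp g g i j i j + csharp g g j i i j
        + csharp g g i j j i + csharp g g j i j i := by
    intro i j
    simp only [cP]
    ring
  have hsum8 : (∑ i : Fin N, ∑ j : Fin N,
      cP (fun a b c d => cflat g g a b c d + 4 * csharp g g a b c d) i j i j)
      = 3 * (ng : ℂ) + 2 * (b : ℂ) := by
    simp only [hcP, Finset.sum_add_distrib, ← Finset.mul_sum]
    rw [hflat1, hflat2, hflat3, hflat4, hsharp1, hsharp2, hsharp3, hsharp4]
    ring
  -- the contracted fixed-point equation, complex form
  have hmainC : (((N : ℂ) + 18) / N) * (t : ℂ)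
      = 3 * (ng : ℂ) + 2 * (b : ℂ) + 54 / (N : ℂ)^2 * (((N : ℂ)^2 + N)/2) := by
    have h0 : (∑ i : Fin N, ∑ j : Fin N, (((N : ℂ) + 18) / (N : ℂ)) * g i j i j)
        = ∑ i : Fin N, ∑ j : Fin N,
            (cP (fun a b c d => cflat g g a b c d + 4 * csharp g g a b c d) i j i j
              + 54 / (N : ℂ) ^ 2 * Tdelta i j i j) :=
      Finset.sum_congr rfl fun i _ => Finset.sum_congr rfl fun j _ => hfp i j i j
    simp only [Finset.sum_add_distrib, ← Finset.mul_sum] at h0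
    rw [hS] at h0
    rw [hsum8, hT] at h0
    exact h0
  -- real versions
  have hN0 : (0:ℝ) < (N:ℝ) := by exact_mod_cast Nat.lt_of_lt_of_le Nat.zero_lt_one hN
  have hmainR : (((N:ℝ) + 18) / N) * t = 3 * ng + 2 * b + 54 / (N:ℝ)^2 * (((N:ℝ)^2 + N)/2) := by
    have h := hmainC
    rw [show ((N:ℂ)) = (((N:ℝ):ℂ)) from by norm_cast] at h
    exact_mod_cast h
  have hNne : (N:ℝ) ≠ 0 := ne_of_gt hN0
  have hEq : ((N:ℝ) + 18) * t = 3 * N * ng + 2 * N * b + 27 * ((N:ℝ) + 1) := by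
    field_simp at hmainR
    have h2 : (((N:ℝ) + 18) * t) * (2*(N:ℝ)^2) = (3 * N * ng + 2 * N * b + 27 * ((N:ℝ) + 1)) * (2*(N:ℝ)^2) := by
      linear_combination (N:ℝ)^2 * hmainR
    exact mul_right_cancel₀ (by positivity) h2
  -- Cauchy-Schwarz 2 : t² ≤ N b
  have hng0 : 0 ≤ ng := by
    rw [hng]; unfold csqnorm
    exact Finset.sum_nonneg fun i _ => Finset.sum_nonneg fun j _ =>
      Finset.sum_nonneg fun k _ => Finset.sum_nonneg fun l _ => sq_nonneg _
  have hb0 : 0 ≤ b := by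
    rw [hb]
    exact Finset.sum_nonneg fun m _ => Finset.sum_nonneg fun n _ => Complex.normSq_nonneg _
  have htB : t = ∑ m : Fin N, (B m m).re := by
    rw [ht]
    calc ∑ i : Fin N, ∑ j : Fin N, (g i j i j).re
        = ∑ j : Fin N, ∑ i : Fin N, (g i j i j).re := Finset.sum_comm
      _ = ∑ m : Fin N, (B m m).re :=
          Finset.sum_congr rfl fun m _ => (Complex.re_sum _ _).symm
  have hI2 : t^2 ≤ (N:ℝ) * b := by
    have cs := Finset.sum_mul_sq_le_sq_mul_sq Finset.univ
      (fun _ : Fin N => (1:ℝ)) (fun m => (B m m).re)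
    simp only [one_mul, one_pow, Finset.sum_const, Finset.card_univ, Fintype.card_fin,
      nsmul_eq_mul, mul_one] at cs
    have h1 : (∑ m : Fin N, (B m m).re^2) ≤ ∑ m : Fin N, Complex.normSq (B m m) :=
      Finset.sum_le_sum fun m _ => by
        rw [Complex.normSq_apply]; nlinarith [sq_nonneg (B m m).im]
    have h2 : (∑ m : Fin N, Complex.normSq (B m m)) ≤ b := by
      rw [hb]
      exact Finset.sum_le_sum fun m _ =>
        Finset.single_le_sum (fun n _ => Complex.normSq_nonneg _) (Finset.mem_univ m)
    rw [htB]
    calc (∑ m : Fin N, (B m m).re)^2 ≤ (N:ℝ) * ∑ m : Fin N, (B m m).re^2 := cs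
      _ ≤ (N:ℝ) * b := mul_le_mul_of_nonneg_left (h1.trans h2) hN0.le
  -- Cauchy-Schwarz 1 (weighted) : 2 t² ≤ (N² + N) ng
  have hI1 : 2 * t^2 ≤ ((N:ℝ)^2 + N) * ng := by
    set d : Fin N × Fin N → ℝ := fun p => (g p.1 p.2 p.1 p.2).re with hd
    set u : Fin N × Fin N → ℝ := fun p => if p.1 = p.2 then 1 else Real.sqrt 2 with hu
    have hu0 : ∀ p, u p ≠ 0 := by
      intro p
      rw [hu]
      by_cases h : p.1 = p.2
      · simp [h]
      · simp only [h, if_false]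
        exact Real.sqrt_ne_zero'.mpr (by norm_num)
    have htd : t = ∑ p : Fin N × Fin N, d p := by
      rw [ht, hd, Fintype.sum_prod_type]
    have cs := Finset.sum_mul_sq_le_sq_mul_sq Finset.univ
      (fun p => (u p)⁻¹) (fun p => u p * d p)
    have lhs_eq : (∑ p : Fin N × Fin N, (u p)⁻¹ * (u p * d p)) = t := by
      rw [htd]
      exact Finset.sum_congr rfl fun p _ => by
        rw [← mul_assoc, inv_mul_cancel₀ (hu0 p), one_mul]
    have hA : (∑ p : Fin N × Fin N, ((u p)⁻¹)^2) = ((N:ℝ)^2 + N)/2 := by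
      have h1 : ∀ p : Fin N × Fin N, ((u p)⁻¹)^2 = (1:ℝ)/2 + (if p.1 = p.2 then 1/2 else 0) := by
        intro p
        rw [hu]
        by_cases h : p.1 = p.2
        · simp [h]; norm_num
        · simp only [h, if_false]
          rw [inv_pow, Real.sq_sqrt (by norm_num : (0:ℝ) ≤ 2)]
          norm_num
      simp only [h1]
      rw [Finset.sum_add_distrib, Finset.sum_const, Finset.card_univ]
      rw [Fintype.sum_prod_type]
      simp only [Finset.sum_ite_eq, Finset.mem_univ, if_true]
      rw [Finset.sum_const, Finset.card_univ, Fintype.card_fin, Fintype.card_prod,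
        Fintype.card_fin]
      push_cast
      ring
    have hC : (∑ p : Fin N × Fin N, (u p * d p)^2) ≤ ng := by
      have h1 : ∀ p : Fin N × Fin N, (u p * d p)^2
          = (if p.1 = p.2 then (1:ℝ) else 2) * (d p)^2 := by
        intro p
        rw [hu, mul_pow]
        by_cases h : p.1 = p.2
        · simp [h]
        · simp only [h, if_false]
          rw [Real.sq_sqrt (by norm_num : (0:ℝ) ≤ 2)]
      simp only [h1]
      rw [Fintype.sum_prod_type, hng]
      unfold csqnorm
      refine Finset.sum_le_sum fun i _ => Finset.sum_le_sum fun j _ => ?_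
      have hq : ∀ k l, (0:ℝ) ≤ ‖g i j k l‖ ^ 2 := fun k l => sq_nonneg _
      have hd2 : (d (i, j))^2 ≤ ‖g i j i j‖ ^ 2 := by
        rw [hd, Complex.sq_norm, Complex.normSq_apply]
        simp only
        nlinarith [sq_nonneg (g i j i j).im]
      by_cases h : i = j
      · subst h
        rw [if_pos rfl, one_mul]
        calc (d (i, i))^2 ≤ ‖g i i i i‖ ^ 2 := hd2
          _ ≤ ∑ l : Fin N, ‖g i i i l‖ ^ 2 :=
              Finset.single_le_sum (fun l _ => hq i l) (Finset.mem_univ i)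
          _ ≤ ∑ k : Fin N, ∑ l : Fin N, ‖g i i k l‖ ^ 2 :=
              Finset.single_le_sum
                (fun k _ => Finset.sum_nonneg fun l _ => hq k l) (Finset.mem_univ i)
      · rw [if_neg h]
        have e1 : ‖g i j i j‖ ^ 2 ≤ ∑ l : Fin N, ‖g i j i l‖ ^ 2 :=
          Finset.single_le_sum (fun l _ => hq i l) (Finset.mem_univ j)
        have e2 : ‖g i j i j‖ ^ 2 ≤ ∑ l : Fin N, ‖g i j j l‖ ^ 2 := by
          have : ‖g i j i j‖ ^ 2 = ‖g i j j i‖ ^ 2 := by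
            rw [hsym2 i j j i]
          rw [this]
          exact Finset.single_le_sum (fun l _ => hq j l) (Finset.mem_univ i)
        have e3 : (∑ l : Fin N, ‖g i j i l‖ ^ 2)
            + (∑ l : Fin N, ‖g i j j l‖ ^ 2)
            ≤ ∑ k : Fin N, ∑ l : Fin N, ‖g i j k l‖ ^ 2 :=
          pair_le_sum (fun k => ∑ l : Fin N, ‖g i j k l‖ ^ 2)
            (fun k => Finset.sum_nonneg fun l _ => hq k l) h
        linarith [hd2, e1, e2, e3]
    have key : t^2 ≤ (((N:ℝ)^2 + N)/2) * ng := by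
      rw [← lhs_eq]
      calc (∑ p : Fin N × Fin N, (u p)⁻¹ * (u p * d p))^2
          ≤ (∑ p : Fin N × Fin N, ((u p)⁻¹)^2) * (∑ p : Fin N × Fin N, (u p * d p)^2) := cs
        _ ≤ (((N:ℝ)^2 + N)/2) * ng := by
            rw [hA]
            exact mul_le_mul_of_nonneg_left hC (by positivity)
    linarith [key]
  -- final arithmetic
  have e : ((N:ℝ)+1)*(((N:ℝ)+18)*t)
      = ((N:ℝ)+1)*(3*N*ng) + ((N:ℝ)+1)*(2*N*b) + ((N:ℝ)+1)*(27*((N:ℝ)+1)) := by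
    linear_combination ((N:ℝ)+1) * hEq
  have i2 : 2*((N:ℝ)+1)*(t^2) ≤ 2*((N:ℝ)+1)*((N:ℝ)*b) :=
    mul_le_mul_of_nonneg_left hI2 (by linarith)
  have h4' : (2*(N:ℝ)+8)*t^2 + 27*((N:ℝ)+1)^2 ≤ ((N:ℝ)+18)*((N:ℝ)+1)*t := by
    linarith only [e, hI1, i2]
  have h5 : ((N:ℝ)+18)^2*((N:ℝ)+1)^2 ≥ 4*(2*(N:ℝ)+8)*(27*((N:ℝ)+1)^2) := by
    have hm := mul_le_mul_of_nonneg_left h4' (show (0:ℝ) ≤ 4*(2*(N:ℝ)+8) by linarith)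
    linarith only [hm, sq_nonneg (2*(2*(N:ℝ)+8)*t - ((N:ℝ)+18)*((N:ℝ)+1))]
  have h6 : (N:ℝ)^2 ≥ 180*(N:ℝ) + 540 := by
    have hp : (0:ℝ) < ((N:ℝ)+1)^2 := by positivity
    have hX : 0 ≤ ((N:ℝ)^2 - 180*N - 540)*((N:ℝ)+1)^2 := by linarith only [h5]
    by_contra hcon
    push_neg at hcon
    have hneg : ((N:ℝ)^2 - 180*N - 540)*((N:ℝ)+1)^2 < 0 :=
      mul_neg_of_neg_of_pos (by linarith only [hcon]) hp
    linarith only [hX, hneg]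
  have h183 : 183 ≤ N := by
    by_contra hlt
    push_neg at hlt
    have hle : (N:ℝ) ≤ 182 := by
      have : N ≤ 182 := Nat.le_of_lt_succ hlt
      exact_mod_cast this
    linarith only [h6, hle, mul_nonneg (sub_nonneg.mpr hle) hN0.le]
  refine ⟨?_, h183⟩
  have hc : (183:ℝ) ≤ (N:ℝ) := by exact_mod_cast h183
  have h90 : (0:ℝ) ≤ (N:ℝ) - 90 := by linarith
  have hs : Real.sqrt 8640 ≤ (N:ℝ) - 90 := by
    rw [show ((N:ℝ)-90) = Real.sqrt (((N:ℝ)-90)^2) from (Real.sqrt_sq h90).symm]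
    exact Real.sqrt_le_sqrt (by linarith only [h6, hc])
  have hs2 : 24*Real.sqrt 15 = Real.sqrt 8640 := by
    rw [show (8640:ℝ) = 24^2 * 15 by norm_num, Real.sqrt_mul (by positivity) 15,
      Real.sqrt_sq (by norm_num : (0:ℝ) ≤ 24)]
  linarith [hs, hs2]
end
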